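/- (Lemma 2, intermediate lemma) Fix k ≥ 1, set L = 2/ρ and δ = 2B_in + 2B_out·B_λ. Assume: (i) x* ∈ X satisfies Ax* = b, λ* ∈ ℝᵖ maximizes Φ_ρ over ℝᵖ, and (x*, λ*) is a saddle point of the Lagrangian L(x;λ) = f(x) + ⟨Ax − b, λ⟩, i.e. L(x*;λ) ≤ L(x*;λ*) ≤ L(x;λ*) for all x ∈ X and λ ∈ ℝᵖ; (ii) D ⊆ ℝᵖ is a nonempty compact convex set with λ* ∈ D, and D_δ ⊇ D is a set with ‖λ₁ − λ₂‖ ≤ B_λ for all λ₁, λ₂ ∈ D_δ such that λ + ε_out^j ∈ D_δ whenever λ ∈ D and j ∈ {k−1, k}; (iii) for j ∈ {k−1, k}: λ_j ∈ D, x̃_j ∈ X satisfies L_ρ(x̃_j;λ_j) − min_{x∈X} L_ρ(x;λ_j) ≤ ε_in^j with 0 ≤ ε_in^j ≤ B_in, ‖ε_out^j‖ ≤ B_out, and λ_{j+1} = Π_D(λ_j + (1/L)(r(x̃_j) + ε_out^j)); (iv) for j ∈ {k−1, k}, setting Φ_{δ,L}(λ_j) = L_ρ(x̃_j;λ_j)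 + B_out·B_λ and s_{δ,L}(λ_j) = r(x̃_j) + ε_out^j, the inexact-oracle inequalities hold: for all λ ∈ D_δ, 0 ≥ Φ_ρ(λ) − (Φ_{δ,L}(λ_j) + ⟨s_{δ,L}(λ_j), λ − λ_j⟩) ≥ −(L/2)‖λ − λ_j‖² − δ. Define φ^k(λ) = (L/2)‖λ_k − λ‖² + (1/2)‖λ_{k−1} − λ*‖², φ^{k+1}(λ) = (L/2)‖λ_{k+1} − λ‖² + (1/2)‖λ_k − λ*‖², and E = (1 + 4/L)·B_λ·B_out + (1 + 4/L)·B_in + (1/2 + 1/(2L))·B_out². Then for every λ ∈ D: f(x̃_k) − f(x*) + ⟨λ, r(x̃_k)⟩ ≤ φ^k(λ) − φ^{k+1}(λ) + E. -/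

import Mathlib

open RealInnerProductSpace

private lemma aux_three_point {E : Type*} [NormedAddCommGroup E] [InnerProductSpace ℝ E]
    (a b y : E) : 2 * ⟪b - a, y - b⟫ = ‖y - a‖ ^ 2 - ‖y - b‖ ^ 2 - ‖b - a‖ ^ 2 := by
  rw [show y - a = (y - b) + (b - a) from by abel, norm_add_sq_real,
    real_inner_comm (y - b) (b - a)]
  ring

private lemma aux_proj_vi {E : Type*} [NormedAddCommGroup E] [InnerProductSpace ℝ E]
    {D : Set E} (hD : Convex ℝ D) {z q : E} (hq : q ∈ D)
    (hmin : ∀ y ∈ D, dist z q ≤ dist z y) :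
    ∀ y ∈ D, ⟪z - q, y - q⟫ ≤ 0 := by
  intro y hy
  by_contra hcon
  push_neg at hcon
  have hvne : y - q ≠ 0 := by
    intro h0
    rw [h0, inner_zero_right] at hcon
    exact lt_irrefl 0 hcon
  have hv2 : 0 < ‖y - q‖ ^ 2 := by
    have := norm_pos_iff.mpr hvne
    positivity
  set c : ℝ := ⟪z - q, y - q⟫ with hc
  set t : ℝ := min 1 (c / ‖y - q‖ ^ 2) with ht
  have ht0 : 0 < t := lt_min one_pos (div_pos hcon hv2)
  have ht1 : t ≤ 1 := min_le_left _ _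
  have htc : t * ‖y - q‖ ^ 2 ≤ c := by
    have h1 : t ≤ c / ‖y - q‖ ^ 2 := min_le_right _ _
    have h2 : (c / ‖y - q‖ ^ 2) * ‖y - q‖ ^ 2 = c := by field_simp
    nlinarith
  have hmem : q + t • (y - q) ∈ D := by
    have h := hD hq hy (by linarith : (0:ℝ) ≤ 1 - t) (le_of_lt ht0) (by ring)
    convert h using 1
    module
  have hd := hmin _ hmem
  rw [dist_eq_norm, dist_eq_norm,
    show z - (q + t • (y - q)) = (z - q) - t • (y - q) from by module] at hd
  have hd2 : ‖z - q‖ ^ 2 ≤ ‖(z - q) - t • (y - q)‖ ^ 2 := by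
    have := norm_nonneg (z - q)
    nlinarith
  have hexp : ‖(z - q) - t • (y - q)‖ ^ 2 =
      ‖z - q‖ ^ 2 - 2 * ⟪z - q, t • (y - q)⟫ + ‖t • (y - q)‖ ^ 2 :=
    norm_sub_sq_real _ _
  rw [real_inner_smul_right, norm_smul, Real.norm_eq_abs, abs_of_pos ht0, mul_pow] at hexp
  nlinarith [hexp, hd2]

set_option maxHeartbeats 2000000 in
theorem intermediate_lemma
    (n p : ℕ)
    (f : EuclideanSpace ℝ (Fin n) → ℝ)
    (hf : ConvexOn ℝ Set.univ f)
    (X : Set (EuclideanSpace ℝ (Fin n)))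
    (hXne : X.Nonempty) (hXcompact : IsCompact X) (hXconvex : Convex ℝ X)
    (A : EuclideanSpace ℝ (Fin n) →ₗ[ℝ] EuclideanSpace ℝ (Fin p))
    (b : EuclideanSpace ℝ (Fin p))
    (ρ : ℝ) (hρ : 0 < ρ)
    (Lρ : EuclideanSpace ℝ (Fin n) → EuclideanSpace ℝ (Fin p) → ℝ)
    (hLρ : ∀ x μ, Lρ x μ = f x + ⟪A x - b, μ⟫ + ρ / 2 * ‖A x - b‖ ^ 2)
    (Φ : EuclideanSpace ℝ (Fin p) → ℝ)
    (hΦ : ∀ μ, ∃ x ∈ X, Lρ x μ = Φ μ ∧ ∀ y ∈ X, Φ μ ≤ Lρ y μ)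
    (k : ℕ) (hk : 1 ≤ k)
    (Bin Bout Blam : ℝ)
    (L : ℝ) (hLdef : L = 2 / ρ)
    (δ : ℝ) (hδdef : δ = 2 * Bin + 2 * Bout * Blam)
    -- (i) primal/dual optimal pair forming a saddle point of the Lagrangian
    (xstar : EuclideanSpace ℝ (Fin n)) (hxstarX : xstar ∈ X)
    (hxstar_feas : A xstar = b)
    (lamstar : EuclideanSpace ℝ (Fin p))
    (hlamstar_max : ∀ lam, Φ lam ≤ Φ lamstar)
    (hsaddle_left : ∀ lam : EuclideanSpace ℝ (Fin p),
      f xstar + ⟪A xstar - b, lam⟫ ≤ f xstar + ⟪A xstar - b, lamstar⟫)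
    (hsaddle_right : ∀ x ∈ X,
      f xstar + ⟪A xstar - b, lamstar⟫ ≤ f x + ⟪A x - b, lamstar⟫)
    -- (ii) the sets `D` and `D_δ`
    (D Dδ : Set (EuclideanSpace ℝ (Fin p)))
    (hDne : D.Nonempty) (hDcompact : IsCompact D) (hDconvex : Convex ℝ D)
    (hlamstarD : lamstar ∈ D)
    (hDsub : D ⊆ Dδ)
    (hDδ_diam : ∀ l₁ ∈ Dδ, ∀ l₂ ∈ Dδ, ‖l₁ - l₂‖ ≤ Blam)
    -- the iterates and errors
    (lam : ℕ → EuclideanSpace ℝ (Fin p))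
    (xt : ℕ → EuclideanSpace ℝ (Fin n))
    (εin : ℕ → ℝ)
    (εout : ℕ → EuclideanSpace ℝ (Fin p))
    (hDδ_shift : ∀ j, (j = k - 1 ∨ j = k) → ∀ l ∈ D, l + εout j ∈ Dδ)
    -- (iii) algorithmic hypotheses for `j ∈ {k−1, k}`
    (hlam_mem : ∀ j, (j = k - 1 ∨ j = k) → lam j ∈ D)
    (hxt_mem : ∀ j, (j = k - 1 ∨ j = k) → xt j ∈ X)
    (hxt_approx : ∀ j, (j = k - 1 ∨ j = k) →
      Lρ (xt j) (lam j) - Φ (lam j) ≤ εin j)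
    (hεin : ∀ j, (j = k - 1 ∨ j = k) → 0 ≤ εin j ∧ εin j ≤ Bin)
    (hεout : ∀ j, (j = k - 1 ∨ j = k) → ‖εout j‖ ≤ Bout)
    (hproj_mem : ∀ j, (j = k - 1 ∨ j = k) → lam (j + 1) ∈ D)
    (hproj_min : ∀ j, (j = k - 1 ∨ j = k) → ∀ y ∈ D,
      dist (lam j + (1 / L) • (A (xt j) - b + εout j)) (lam (j + 1)) ≤
        dist (lam j + (1 / L) • (A (xt j) - b + εout j)) y)
    -- (iv) inexact-oracle inequalities for `j ∈ {k−1, k}`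
    (horacle : ∀ j, (j = k - 1 ∨ j = k) → ∀ l ∈ Dδ,
      0 ≥ Φ l - ((Lρ (xt j) (lam j) + Bout * Blam) +
            ⟪A (xt j) - b + εout j, l - lam j⟫) ∧
      Φ l - ((Lρ (xt j) (lam j) + Bout * Blam) +
            ⟪A (xt j) - b + εout j, l - lam j⟫) ≥
        -(L / 2) * ‖l - lam j‖ ^ 2 - δ)
    -- the constant `E`
    (Econst : ℝ)
    (hEdef : Econst = (1 + 4 / L) * Blam * Bout + (1 + 4 / L) * Bin +
      (1 / 2 + 1 / (2 * L)) * Bout ^ 2) :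
    ∀ l ∈ D,
      f (xt k) - f xstar + ⟪l, A (xt k) - b⟫ ≤
        (L / 2 * ‖lam k - l‖ ^ 2 + 1 / 2 * ‖lam (k - 1) - lamstar‖ ^ 2) -
          (L / 2 * ‖lam (k + 1) - l‖ ^ 2 + 1 / 2 * ‖lam k - lamstar‖ ^ 2) +
          Econst := by
  intro l hl
  have hjk : (k = k - 1 ∨ k = k) := Or.inr rfl
  have hjk1 : (k - 1 = k - 1 ∨ k - 1 = k) := Or.inl rfl
  have hk1 : k - 1 + 1 = k := Nat.succ_pred_eq_of_pos hk
  have hL : 0 < L := by rw [hLdef]; positivity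
  have hLne : L ≠ 0 := ne_of_gt hL
  have hρL : ρ = 2 / L := by rw [hLdef]; field_simp
  -- basic nonnegativity
  have hBout0 : 0 ≤ Bout := le_trans (norm_nonneg _) (hεout k hjk)
  have hBin0 : 0 ≤ Bin := le_trans (hεin k hjk).1 (hεin k hjk).2
  have hBlam0 : 0 ≤ Blam := by
    have := hDδ_diam lamstar (hDsub hlamstarD) lamstar (hDsub hlamstarD)
    calc (0:ℝ) ≤ ‖lamstar - lamstar‖ := norm_nonneg _
    _ ≤ Blam := this
  -- memberships
  have hlm1D : lam (k - 1) ∈ D := hlam_mem _ hjk1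
  have hlm2D : lam k ∈ D := hlam_mem k hjk
  have hlm3D : lam (k + 1) ∈ D := hproj_mem k hjk
  ---------------------------------------------------------------
  -- Step (k-1): 1/2‖λk - λ*‖² ≤ 1/2‖λ_{k-1} - λ*‖² + δ/L
  ---------------------------------------------------------------
  have hmin1 := hproj_min (k - 1) hjk1
  have hmem1 := hproj_mem (k - 1) hjk1
  simp only [hk1] at hmin1 hmem1
  have hvi1 := aux_proj_vi hDconvex hmem1 hmin1 lamstar hlamstarD
  rw [show (lam (k - 1) + (1 / L) • (A (xt (k - 1)) - b + εout (k - 1))) - lam k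
      = (1 / L) • (A (xt (k - 1)) - b + εout (k - 1)) - (lam k - lam (k - 1)) from by module,
    inner_sub_left, real_inner_smul_left] at hvi1
  have hvi1' : ⟪A (xt (k - 1)) - b + εout (k - 1), lamstar - lam k⟫ ≤
      L * ⟪lam k - lam (k - 1), lamstar - lam k⟫ := by
    have h := mul_le_mul_of_nonneg_left
      (by linarith : (1 / L) * ⟪A (xt (k - 1)) - b + εout (k - 1), lamstar - lam k⟫ ≤
        ⟪lam k - lam (k - 1), lamstar - lam k⟫) hL.le
    calc ⟪A (xt (k - 1)) - b + εout (k - 1), lamstar - lam k⟫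
        = L * ((1 / L) * ⟪A (xt (k - 1)) - b + εout (k - 1), lamstar - lam k⟫) := by
          field_simp
      _ ≤ L * ⟪lam k - lam (k - 1), lamstar - lam k⟫ := h
  have horA := (horacle (k - 1) hjk1 lamstar (hDsub hlamstarD)).1
  have horB := (horacle (k - 1) hjk1 (lam k) (hDsub hlm2D)).2
  have hmax2 : Φ (lam k) ≤ Φ lamstar := hlamstar_max _
  have hgid : ⟪A (xt (k - 1)) - b + εout (k - 1), lamstar - lam k⟫ =
      ⟪A (xt (k - 1)) - b + εout (k - 1), lamstar - lam (k - 1)⟫ -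
      ⟪A (xt (k - 1)) - b + εout (k - 1), lam k - lam (k - 1)⟫ := by
    simp only [inner_sub_right]; ring
  have h3p1 : 2 * ⟪lam k - lam (k - 1), lamstar - lam k⟫ =
      ‖lamstar - lam (k - 1)‖ ^ 2 - ‖lamstar - lam k‖ ^ 2 - ‖lam k - lam (k - 1)‖ ^ 2 :=
    aux_three_point _ _ _
  have hLJ1 : L * ⟪lam k - lam (k - 1), lamstar - lam k⟫ =
      L / 2 * (‖lamstar - lam (k - 1)‖ ^ 2 - ‖lamstar - lam k‖ ^ 2 -
        ‖lam k - lam (k - 1)‖ ^ 2) := by linear_combination (L / 2) * h3p1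
  have hstep0 : L / 2 * (‖lamstar - lam k‖ ^ 2 - ‖lamstar - lam (k - 1)‖ ^ 2) ≤ δ := by
    linarith [hgid, hvi1', hLJ1]
  have hstep1 : 1 / 2 * ‖lamstar - lam k‖ ^ 2 ≤
      1 / 2 * ‖lamstar - lam (k - 1)‖ ^ 2 + δ / L := by
    have h := mul_le_mul_of_nonneg_left hstep0 (by positivity : (0:ℝ) ≤ 1 / L)
    have hid : (1 / L) * (L / 2 * (‖lamstar - lam k‖ ^ 2 - ‖lamstar - lam (k - 1)‖ ^ 2))
        = 1 / 2 * ‖lamstar - lam k‖ ^ 2 - 1 / 2 * ‖lamstar - lam (k - 1)‖ ^ 2 := by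
      field_simp
    have hid2 : (1 / L) * δ = δ / L := by ring
    linarith
  ---------------------------------------------------------------
  -- Step k
  ---------------------------------------------------------------
  have hvi2 := aux_proj_vi hDconvex (hproj_mem k hjk) (hproj_min k hjk) l hl
  rw [show (lam k + (1 / L) • (A (xt k) - b + εout k)) - lam (k + 1)
      = (1 / L) • (A (xt k) - b + εout k) - (lam (k + 1) - lam k) from by module,
    inner_sub_left, real_inner_smul_left] at hvi2
  have hvi2' : ⟪A (xt k) - b + εout k, l - lam (k + 1)⟫ ≤
      L * ⟪lam (k + 1) - lam k, l - lam (k + 1)⟫ := by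
    have h := mul_le_mul_of_nonneg_left
      (by linarith : (1 / L) * ⟪A (xt k) - b + εout k, l - lam (k + 1)⟫ ≤
        ⟪lam (k + 1) - lam k, l - lam (k + 1)⟫) hL.le
    calc ⟪A (xt k) - b + εout k, l - lam (k + 1)⟫
        = L * ((1 / L) * ⟪A (xt k) - b + εout k, l - lam (k + 1)⟫) := by field_simp
      _ ≤ L * ⟪lam (k + 1) - lam k, l - lam (k + 1)⟫ := h
  have h3p2 : 2 * ⟪lam (k + 1) - lam k, l - lam (k + 1)⟫ =
      ‖l - lam k‖ ^ 2 - ‖l - lam (k + 1)‖ ^ 2 - ‖lam (k + 1) - lam k‖ ^ 2 :=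
    aux_three_point _ _ _
  have hLJ2 : L * ⟪lam (k + 1) - lam k, l - lam (k + 1)⟫ =
      L / 2 * (‖l - lam k‖ ^ 2 - ‖l - lam (k + 1)‖ ^ 2 - ‖lam (k + 1) - lam k‖ ^ 2) := by
    linear_combination (L / 2) * h3p2
  -- Φ(λk) ≤ f(x*)
  have hPhik : Φ (lam k) ≤ f xstar := by
    obtain ⟨xh, hxhX, hxheq, hxhmin⟩ := hΦ (lam k)
    have h := hxhmin xstar hxstarX
    rw [hLρ] at h
    simpa [hxstar_feas] using h
  have hIn : Lρ (xt k) (lam k) - Φ (lam k) ≤ εin k := hxt_approx k hjk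
  have hInB : εin k ≤ Bin := (hεin k hjk).2
  -- f(xt k) from the definition of Lρ
  have hfeq : f (xt k) = Lρ (xt k) (lam k) - ⟪A (xt k) - b, lam k⟫ -
      ρ / 2 * ‖A (xt k) - b‖ ^ 2 := by
    rw [hLρ]; ring
  -- decomposition of the inner product
  have hSid : ⟪A (xt k) - b, l⟫ = ⟪A (xt k) - b, lam k⟫ +
      ⟪A (xt k) - b + εout k, l - lam (k + 1)⟫ +
      ⟪A (xt k) - b, lam (k + 1) - lam k⟫ + ⟪εout k, lam (k + 1) - l⟫ := by
    simp only [inner_add_left, inner_sub_right]; ring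
  -- Young's inequality absorbing the augmented term
  have hYoung : ⟪A (xt k) - b, lam (k + 1) - lam k⟫ ≤
      ρ / 2 * ‖A (xt k) - b‖ ^ 2 + L / 4 * ‖lam (k + 1) - lam k‖ ^ 2 := by
    have cs := real_inner_le_norm (A (xt k) - b) (lam (k + 1) - lam k)
    have h1 : 0 ≤ (2 * ‖A (xt k) - b‖ - L * ‖lam (k + 1) - lam k‖) ^ 2 := sq_nonneg _
    have h4 : ⟪A (xt k) - b, lam (k + 1) - lam k⟫ * (4 * L) ≤
        4 * ‖A (xt k) - b‖ ^ 2 + L ^ 2 * ‖lam (k + 1) - lam k‖ ^ 2 := by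
      nlinarith [h1, mul_le_mul_of_nonneg_left cs hL.le]
    have h5 : ρ / 2 * ‖A (xt k) - b‖ ^ 2 + L / 4 * ‖lam (k + 1) - lam k‖ ^ 2 =
        (4 * ‖A (xt k) - b‖ ^ 2 + L ^ 2 * ‖lam (k + 1) - lam k‖ ^ 2) / (4 * L) := by
      rw [hρL]
      field_simp
    rw [h5, le_div_iff₀ (by positivity : (0:ℝ) < 4 * L)]
    exact h4
  -- error term
  have hCE : ⟪εout k, lam (k + 1) - l⟫ ≤ Bout * Blam := by
    calc ⟪εout k, lam (k + 1) - l⟫ ≤ ‖εout k‖ * ‖lam (k + 1) - l‖ := real_inner_le_norm _ _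
    _ ≤ Bout * Blam := by
        apply mul_le_mul (hεout k hjk) (hDδ_diam _ (hDsub hlm3D) _ (hDsub hl))
          (norm_nonneg _) hBout0
  -- Econst bound
  have hE : Bin + Bout * Blam + δ / L ≤ Econst := by
    have hdiff : Econst - (Bin + Bout * Blam + δ / L) =
        2 * Bin / L + 2 * (Bout * Blam) / L + 1 / 2 * Bout ^ 2 + Bout ^ 2 / (2 * L) := by
      rw [hEdef, hδdef]
      field_simp
      ring
    have e1 : 0 ≤ 2 * Bin / L := by positivity
    have e2 : 0 ≤ 2 * (Bout * Blam) / L := by positivity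
    have e3 : 0 ≤ 1 / 2 * Bout ^ 2 := by positivity
    have e4 : 0 ≤ Bout ^ 2 / (2 * L) := by positivity
    linarith
  -- assemble
  have hw0 : 0 ≤ L / 4 * ‖lam (k + 1) - lam k‖ ^ 2 := by positivity
  rw [real_inner_comm (A (xt k) - b) l,
    show ‖lam k - l‖ = ‖l - lam k‖ from norm_sub_rev _ _,
    show ‖lam (k + 1) - l‖ = ‖l - lam (k + 1)‖ from norm_sub_rev _ _,
    show ‖lam (k - 1) - lamstar‖ = ‖lamstar - lam (k - 1)‖ from norm_sub_rev _ _,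
    show ‖lam k - lamstar‖ = ‖lamstar - lam k‖ from norm_sub_rev _ _]
  linarith [hSid, hvi2', hLJ2, hYoung, hCE, hPhik, hIn, hInB, hfeq, hstep1, hE, hw0]
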